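/- (Z Pauli twirl with measurement.) With B and B'_x as in the Z Pauli twirl lemma, for every density matrix ρ on ℂ² ⊗ H: (1/2)·∑_{b,r∈{0,1}} (|b⟩⟨b| H Zʳ ⊗ I) B (Zʳ⊗I) ρ (Zʳ⊗I) B† (Zʳ H |b⟩⟨b| ⊗ I) = ∑_{b,x∈{0,1}} (|b⟩⟨b| H ⊗ I) B'_x ρ B'_x† (H |b⟩⟨b| ⊗ I), where H = (1/√2)[[1,1],[1,−1]] is the Hadamard matrix. -/

import Mathlib

open Matrix Kronecker ComplexOrder

noncomputable def PauliX : Matrix (Fin 2) (Fin 2) ℂ := !![0,1;1,0]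
noncomputable def PauliZ : Matrix (Fin 2) (Fin 2) ℂ := !![1,0;0,-1]
noncomputable def Had : Matrix (Fin 2) (Fin 2) ℂ :=
  (((Real.sqrt 2)⁻¹ : ℝ) : ℂ) • !![1,1;1,-1]
noncomputable def proj (b : Fin 2) : Matrix (Fin 2) (Fin 2) ℂ :=
  Matrix.single b b 1

lemma kron_conjTranspose {l n : Type*} [Fintype l] [Fintype n]
    (A : Matrix l l ℂ) (C : Matrix n n ℂ) : (A ⊗ₖ C)ᴴ = Aᴴ ⊗ₖ Cᴴ := by
  ext ⟨i,j⟩ ⟨k,lq⟩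
  simp [Matrix.conjTranspose_apply, mul_comm]

lemma HadH : Hadᴴ = Had := by
  ext i j
  fin_cases i <;> fin_cases j <;> simp [Had, Matrix.conjTranspose_apply]

lemma projH (b : Fin 2) : (proj b)ᴴ = proj b := by
  ext i j
  fin_cases b <;> fin_cases i <;> fin_cases j <;>
    simp [proj, Matrix.conjTranspose_apply, Matrix.single]

lemma ZHerm : PauliZᴴ = PauliZ := by
  ext i j; fin_cases i <;> fin_cases j <;> simp [PauliZ, Matrix.conjTranspose_apply]

lemma key2 (r x z : Fin 2) :
    PauliZ ^ (r:ℕ) * (PauliX ^ (x:ℕ) * PauliZ ^ (z:ℕ)) * PauliZ ^ (r:ℕ)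
      = ((-1:ℂ) ^ ((r:ℕ)*(x:ℕ))) • (PauliX ^ (x:ℕ) * PauliZ ^ (z:ℕ)) := by
  fin_cases r <;> fin_cases x <;> fin_cases z <;>
    · ext i j
      fin_cases i <;> fin_cases j <;>
        simp [PauliX, PauliZ, Matrix.mul_apply, Fin.sum_univ_two]

lemma key3 (b x : Fin 2) :
    proj b * Had * PauliX ^ (x:ℕ) = ((-1:ℂ) ^ ((b:ℕ)*(x:ℕ))) • (proj b * Had) := by
  fin_cases b <;> fin_cases x <;>
    · ext i j
      fin_cases i <;> fin_cases j <;>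
        simp [proj, Had, PauliX, Matrix.mul_apply, Fin.sum_univ_two,
          Matrix.single]

lemma key (b r x z : Fin 2) :
    proj b * Had * PauliZ ^ (r:ℕ) * (PauliX ^ (x:ℕ) * PauliZ ^ (z:ℕ)) * PauliZ ^ (r:ℕ)
      = ((-1:ℂ) ^ (((b:ℕ)+(r:ℕ))*(x:ℕ))) • (proj b * Had * PauliZ ^ (z:ℕ)) := by
  have h : proj b * Had * PauliZ ^ (r:ℕ) * (PauliX ^ (x:ℕ) * PauliZ ^ (z:ℕ)) * PauliZ ^ (r:ℕ)
      = proj b * Had * (PauliZ ^ (r:ℕ) * (PauliX ^ (x:ℕ) * PauliZ ^ (z:ℕ)) * PauliZ ^ (r:ℕ)) := by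
    simp only [Matrix.mul_assoc]
  rw [h, key2, mul_smul_comm, ← Matrix.mul_assoc, key3, Matrix.smul_mul, smul_smul]
  congr 1
  rw [← pow_add]
  congr 1
  ring

theorem stmt_7 {m : Type*} [Fintype m] [DecidableEq m]
    (Bc : Fin 2 → Fin 2 → Matrix m m ℂ)
    (B : Matrix (Fin 2 × m) (Fin 2 × m) ℂ)
    (hB : B = ∑ x : Fin 2, ∑ z : Fin 2,
      ((PauliX ^ (x : ℕ) * PauliZ ^ (z : ℕ)) ⊗ₖ Bc x z))
    (B' : Fin 2 → Matrix (Fin 2 × m) (Fin 2 × m) ℂ)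
    (hB' : ∀ x, B' x = ∑ z : Fin 2, (PauliZ ^ (z : ℕ)) ⊗ₖ Bc x z)
    (ρ : Matrix (Fin 2 × m) (Fin 2 × m) ℂ)
    (hρ : ρ.PosSemidef) (hρ1 : ρ.trace = 1) :
    (1/2 : ℂ) • ∑ b : Fin 2, ∑ r : Fin 2,
        ((proj b * Had * PauliZ ^ (r : ℕ)) ⊗ₖ (1 : Matrix m m ℂ)) * B *
          ((PauliZ ^ (r : ℕ)) ⊗ₖ (1 : Matrix m m ℂ)) * ρ *
          ((PauliZ ^ (r : ℕ)) ⊗ₖ (1 : Matrix m m ℂ)) * Bᴴ *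
          ((PauliZ ^ (r : ℕ) * Had * proj b) ⊗ₖ (1 : Matrix m m ℂ))
      = ∑ b : Fin 2, ∑ x : Fin 2,
        ((proj b * Had) ⊗ₖ (1 : Matrix m m ℂ)) * B' x * ρ * (B' x)ᴴ *
          ((Had * proj b) ⊗ₖ (1 : Matrix m m ℂ)) := by
  set G : Fin 2 → Fin 2 → Matrix (Fin 2 × m) (Fin 2 × m) ℂ :=
    fun b x => ((proj b * Had) ⊗ₖ (1 : Matrix m m ℂ)) * B' x with hG
  have stepA : ∀ b r : Fin 2,
      ((proj b * Had * PauliZ ^ (r:ℕ)) ⊗ₖ (1 : Matrix m m ℂ)) * B *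
        ((PauliZ ^ (r:ℕ)) ⊗ₖ (1 : Matrix m m ℂ))
      = ∑ x : Fin 2, ((-1:ℂ) ^ (((b:ℕ)+(r:ℕ))*(x:ℕ))) • G b x := by
    intro b r
    rw [hB]
    simp only [hG, hB', Finset.mul_sum, Finset.sum_mul, Finset.smul_sum,
      ← Matrix.mul_kronecker_mul, Matrix.mul_one, Matrix.one_mul, key, smul_kronecker]
  have stepB : ∀ b r : Fin 2,
      ((PauliZ ^ (r:ℕ)) ⊗ₖ (1 : Matrix m m ℂ)) * Bᴴ *
        ((PauliZ ^ (r:ℕ) * Had * proj b) ⊗ₖ (1 : Matrix m m ℂ))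
      = (((proj b * Had * PauliZ ^ (r:ℕ)) ⊗ₖ (1 : Matrix m m ℂ)) * B *
        ((PauliZ ^ (r:ℕ)) ⊗ₖ (1 : Matrix m m ℂ)))ᴴ := by
    intro b r
    simp only [Matrix.conjTranspose_mul, kron_conjTranspose,
      Matrix.conjTranspose_one, Matrix.conjTranspose_pow, ZHerm, HadH, projH,
      Matrix.mul_assoc]
  have hGH : ∀ b x, (G b x)ᴴ
      = (B' x)ᴴ * ((Had * proj b) ⊗ₖ (1 : Matrix m m ℂ)) := by
    intro b x
    simp only [hG, Matrix.conjTranspose_mul, kron_conjTranspose,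
      Matrix.conjTranspose_one, HadH, projH]
  have main : ∀ b r : Fin 2,
      ((proj b * Had * PauliZ ^ (r:ℕ)) ⊗ₖ (1 : Matrix m m ℂ)) * B *
        ((PauliZ ^ (r:ℕ)) ⊗ₖ (1 : Matrix m m ℂ)) * ρ *
        ((PauliZ ^ (r:ℕ)) ⊗ₖ (1 : Matrix m m ℂ)) * Bᴴ *
        ((PauliZ ^ (r:ℕ) * Had * proj b) ⊗ₖ (1 : Matrix m m ℂ))
      = (∑ x : Fin 2, ((-1:ℂ) ^ (((b:ℕ)+(r:ℕ))*(x:ℕ))) • G b x) * ρ *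
        (∑ x : Fin 2, ((-1:ℂ) ^ (((b:ℕ)+(r:ℕ))*(x:ℕ))) • (G b x)ᴴ) := by
    intro b r
    have h0 : ((proj b * Had * PauliZ ^ (r:ℕ)) ⊗ₖ (1 : Matrix m m ℂ)) * B *
        ((PauliZ ^ (r:ℕ)) ⊗ₖ (1 : Matrix m m ℂ)) * ρ *
        ((PauliZ ^ (r:ℕ)) ⊗ₖ (1 : Matrix m m ℂ)) * Bᴴ *
        ((PauliZ ^ (r:ℕ) * Had * proj b) ⊗ₖ (1 : Matrix m m ℂ))
      = (((proj b * Had * PauliZ ^ (r:ℕ)) ⊗ₖ (1 : Matrix m m ℂ)) * B *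
        ((PauliZ ^ (r:ℕ)) ⊗ₖ (1 : Matrix m m ℂ))) * ρ *
        (((PauliZ ^ (r:ℕ)) ⊗ₖ (1 : Matrix m m ℂ)) * Bᴴ *
        ((PauliZ ^ (r:ℕ) * Had * proj b) ⊗ₖ (1 : Matrix m m ℂ))) := by
      simp only [Matrix.mul_assoc]
    rw [h0, stepB, stepA, Matrix.conjTranspose_sum]
    congr 1
    refine Finset.sum_congr rfl fun x _ => ?_
    rw [Matrix.conjTranspose_smul]
    congr 1
    simp
  simp only [main, hGH]
  rw [Finset.smul_sum]
  refine Finset.sum_congr rfl fun b _ => ?_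
  have hRHS : ∀ x, ((proj b * Had) ⊗ₖ (1 : Matrix m m ℂ)) * B' x * ρ * (B' x)ᴴ *
      ((Had * proj b) ⊗ₖ (1 : Matrix m m ℂ))
      = G b x * ρ * ((B' x)ᴴ * ((Had * proj b) ⊗ₖ (1 : Matrix m m ℂ))) := by
    intro x; simp only [hG, Matrix.mul_assoc]
  simp only [hRHS, ← hGH]
  fin_cases b <;>
  · simp only [Fin.sum_univ_two, Fin.val_zero, Fin.val_one, Fin.isValue]
    norm_num
    simp only [Matrix.add_mul, Matrix.mul_add, Matrix.neg_mul, Matrix.mul_neg]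
    module
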